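/- Expectation value of S₃ in a general coherent state: for every n : ℕ, every normalized fiducial vector Ψ₀ and all Euler angles Ω = (φ, θ, ψ), ⟨ R(Ω)Ψ₀ , S₃ · (R(Ω)Ψ₀) ⟩ = A₀ cos θ − A₁(ψ) sin θ, where ⟨·,·⟩ is the standard Hermitian inner product on ℂ^{n+1} (conjugate-linear in the first argument). -/

import Mathlib

open Matrix Complex

/-- Spin operator `S₃` for `2s = n`: diagonal with entries `j - n/2`. -/
noncomputable def S3 (n : ℕ) : Matrix (Fin (n+1)) (Fin (n+1)) ℂ :=
  Matrix.diagonal fun j => (j : ℂ) - (n : ℂ) / 2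

/-- Raising operator `S₊`: `(S₊)_{k+1,k} = √((k+1)(n-k))`. -/
noncomputable def Sp (n : ℕ) : Matrix (Fin (n+1)) (Fin (n+1)) ℂ :=
  Matrix.of fun j k =>
    if (j : ℕ) = (k : ℕ) + 1 then (Real.sqrt (((k : ℕ) + 1) * (n - (k : ℕ))) : ℂ) else 0

/-- Lowering operator `S₋ = S₊ᴴ`. -/
noncomputable def Sm (n : ℕ) : Matrix (Fin (n+1)) (Fin (n+1)) ℂ := (Sp n)ᴴ

/-- `S₂ = (S₊ - S₋)/(2i)`. -/
noncomputable def S2 (n : ℕ) : Matrix (Fin (n+1)) (Fin (n+1)) ℂ :=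
  (2 * Complex.I)⁻¹ • (Sp n - Sm n)

attribute [local instance] Matrix.normedAddCommGroup Matrix.normedSpace

/-- Rotation matrix `R(φ,θ,ψ) = exp(-iφS₃)·exp(-iθS₂)·exp(-iψS₃)`. -/
noncomputable def Rot (n : ℕ) (φ θ ψ : ℝ) : Matrix (Fin (n+1)) (Fin (n+1)) ℂ :=
  NormedSpace.exp ((-Complex.I * (φ : ℂ)) • S3 n) *
    NormedSpace.exp ((-Complex.I * (θ : ℂ)) • S2 n) *
      NormedSpace.exp ((-Complex.I * (ψ : ℂ)) • S3 n)


/-- `f_j = √(j(n-j+1))`. -/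
noncomputable def fc (n j : ℕ) : ℝ := Real.sqrt (j * (n - j + 1))

/-- `A₀ = Σ_j (j - n/2)|c_j|²`. -/
noncomputable def A0 (n : ℕ) (c : ℕ → ℂ) : ℝ :=
  ∑ j ∈ Finset.range (n+1), ((j : ℝ) - (n : ℝ) / 2) * ‖c j‖ ^ 2

/-- `A₁(ψ) = ½ Σ_{j=1}^n f_j (conj(c_j)c_{j-1}e^{iψ} + c_j conj(c_{j-1})e^{-iψ})`. -/
noncomputable def A1 (n : ℕ) (c : ℕ → ℂ) (ψ : ℝ) : ℂ :=
  (1 / 2 : ℂ) * ∑ j ∈ Finset.Icc 1 n, (fc n j : ℂ) *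
    ((starRingEnd ℂ) (c j) * c (j - 1) * Complex.exp (Complex.I * (ψ : ℂ)) +
      c j * (starRingEnd ℂ) (c (j - 1)) * Complex.exp (-(Complex.I * (ψ : ℂ))))

attribute [-instance] Matrix.normedAddCommGroup Matrix.normedSpace
attribute [local instance] Matrix.linftyOpSemiNormedRing Matrix.linftyOpNormedRing
  Matrix.linftyOpNormedAlgebra

noncomputable def S1 (n : ℕ) : Matrix (Fin (n+1)) (Fin (n+1)) ℂ :=
  (2 : ℂ)⁻¹ • (Sp n + Sm n)

lemma L1 (n : ℕ) : S3 n * Sp n = Sp n * S3 n + Sp n := by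
  ext j k
  simp only [S3, Sp, Matrix.diagonal_mul, Matrix.mul_diagonal, Matrix.add_apply, Matrix.of_apply]
  split_ifs with h
  · have : ((j:ℕ) : ℂ) = ((k:ℕ) : ℂ) + 1 := by exact_mod_cast congrArg (Nat.cast : ℕ → ℂ) h
    rw [this]; ring
  · simp

lemma S3_herm (n : ℕ) : (S3 n)ᴴ = S3 n := by
  ext j k
  simp [S3, Matrix.conjTranspose_apply, Matrix.diagonal_apply, eq_comm]
  split_ifs with h
  · subst h
    have : ((j:ℕ) : ℂ) - (n:ℂ)/2 = (((j:ℕ) : ℝ) - (n:ℝ)/2 : ℝ) := by push_cast; ring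
    rw [this, Complex.conj_ofReal]
  · simp

lemma L2 (n : ℕ) : S3 n * Sm n = Sm n * S3 n - Sm n := by
  have h := congrArg Matrix.conjTranspose (L1 n)
  simp only [Matrix.conjTranspose_mul, Matrix.conjTranspose_add, S3_herm] at h
  unfold Sm
  linear_combination (norm := abel) -h

lemma SpSm_apply (n : ℕ) (j k : Fin (n+1)) :
    (Sp n * Sm n) j k = if j = k then (((j:ℕ) * (n - (j:ℕ) + 1) : ℕ) : ℂ) else 0 := by
  rw [Matrix.mul_apply]
  simp only [Sp, Sm, Matrix.conjTranspose_apply, Matrix.of_apply, apply_ite (star : ℂ → ℂ),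
    star_zero, Complex.star_def, Complex.conj_ofReal, ite_mul, mul_ite, zero_mul, mul_zero]
  by_cases hjk : j = k
  · subst hjk
    rw [if_pos rfl]
    by_cases h0 : (j : ℕ) = 0
    · rw [Finset.sum_eq_zero, h0]
      · norm_num
      · intro l _
        rw [if_neg (by omega)]
    · set m := (j : ℕ) - 1 with hmdef
      have hjm : (j : ℕ) = m + 1 := by omega
      have hmn : m < n := by have := j.is_le; omega
      have h2 : n - (m + 1) + 1 = n - m := by omega
      rw [Finset.sum_eq_single (⟨m, by omega⟩ : Fin (n+1))]
      · have hl : ((⟨m, by omega⟩ : Fin (n+1)) : ℕ) = m := rfl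
        conv_rhs => rw [hjm, h2]
        simp only [hl, hjm]
        rw [if_true, if_true, ← Complex.ofReal_mul, Real.mul_self_sqrt
          (mul_nonneg (by positivity) (by
            have : (m:ℝ) ≤ n := by exact_mod_cast hmn.le
            linarith))]
        push_cast [Nat.cast_sub hmn.le]
        ring
      · intro l _ hl
        split_ifs with h1
        · exfalso
          apply hl
          have hv : (l : ℕ) = m := by omega
          exact Fin.ext (by simp [hv])
        · rfl
      · intro h; exact absurd (Finset.mem_univ _) h
  · rw [if_neg hjk, Finset.sum_eq_zero]
    intro l _
    split_ifs with h1 h2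
    · exact absurd (Fin.ext (by omega) : j = k) hjk
    · rfl
    · rfl

lemma SmSp_apply (n : ℕ) (j k : Fin (n+1)) :
    (Sm n * Sp n) j k = if j = k then ((((j:ℕ)+1) * (n - (j:ℕ)) : ℕ) : ℂ) else 0 := by
  rw [Matrix.mul_apply]
  simp only [Sp, Sm, Matrix.conjTranspose_apply, Matrix.of_apply, apply_ite (star : ℂ → ℂ),
    star_zero, Complex.star_def, Complex.conj_ofReal, ite_mul, mul_ite, zero_mul, mul_zero]
  by_cases hjk : j = k
  · subst hjk
    rw [if_pos rfl]
    by_cases h0 : (j : ℕ) = n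
    · rw [Finset.sum_eq_zero]
      · rw [h0]; simp
      · intro l _
        rw [if_neg (by have := l.is_le; omega)]
    · have hjn : (j : ℕ) < n := by have := j.is_le; omega
      rw [Finset.sum_eq_single (⟨(j:ℕ)+1, by omega⟩ : Fin (n+1))]
      · have hl : ((⟨(j:ℕ)+1, by omega⟩ : Fin (n+1)) : ℕ) = (j:ℕ)+1 := rfl
        simp only [hl]
        rw [if_true, if_true, ← Complex.ofReal_mul, Real.mul_self_sqrt
          (mul_nonneg (by positivity) (by
            have : ((j:ℕ):ℝ) ≤ n := by exact_mod_cast hjn.le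
            linarith))]
        push_cast [Nat.cast_sub hjn.le]
        ring
      · intro l _ hl
        split_ifs with h1
        · exfalso
          apply hl
          have hv : (l : ℕ) = (j:ℕ)+1 := by omega
          exact Fin.ext (by simp [hv])
        · rfl
      · intro h; exact absurd (Finset.mem_univ _) h
  · rw [if_neg hjk, Finset.sum_eq_zero]
    intro l _
    split_ifs with h1 h2
    · exact absurd (Fin.ext (by omega) : j = k) hjk
    · rfl
    · rfl

lemma L3 (n : ℕ) : Sp n * Sm n - Sm n * Sp n = (2:ℂ) • S3 n := by
  ext j k
  rw [Matrix.sub_apply, SpSm_apply, SmSp_apply]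
  simp only [S3, Matrix.smul_apply, Matrix.diagonal_apply, smul_ite, smul_zero, smul_eq_mul]
  split_ifs with h
  · subst h
    have hj : (j : ℕ) ≤ n := j.is_le
    push_cast [Nat.cast_sub hj, Nat.cast_sub (by omega : (j:ℕ) ≤ n + 1)]
    ring
  · simp

lemma L3' (n : ℕ) : Sp n * Sm n = Sm n * Sp n + (2:ℂ) • S3 n := by
  linear_combination (norm := abel) L3 n

lemma hs2 (n : ℕ) : Complex.I • S2 n = (2:ℂ)⁻¹ • (Sp n - Sm n) := by
  unfold S2
  rw [smul_smul]
  congr 1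
  have hI := Complex.I_ne_zero
  field_simp

lemma CA3 (n : ℕ) : (Complex.I • S2 n) * S3 n - S3 n * (Complex.I • S2 n) = -(S1 n) := by
  rw [hs2]
  have h1 := L1 n
  have h2 := L2 n
  simp only [S1, sub_mul, mul_sub, smul_mul_assoc, mul_smul_comm, smul_sub, smul_add]
  rw [h1, h2]
  module

lemma CA1 (n : ℕ) : (Complex.I • S2 n) * S1 n - S1 n * (Complex.I • S2 n) = S3 n := by
  rw [hs2]
  have h3 := L3' n
  simp only [S1, sub_mul, mul_sub, add_mul, mul_add, smul_mul_assoc, mul_smul_comm, smul_sub,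
    smul_add, smul_smul]
  rw [h3]
  module

lemma S2_herm (n : ℕ) : (S2 n)ᴴ = S2 n := by
  unfold S2 Sm
  rw [Matrix.conjTranspose_smul, Matrix.conjTranspose_sub, Matrix.conjTranspose_conjTranspose]
  have : (star ((2 * Complex.I)⁻¹) : ℂ) = -(2 * Complex.I)⁻¹ := by
    simp [Complex.ext_iff]
  rw [this, neg_smul, ← smul_neg, neg_sub]

lemma Mderiv (n : ℕ) (t : ℝ) :
    (Complex.I • S2 n) * (Real.cos t • S3 n - Real.sin t • S1 n) -
      (Real.cos t • S3 n - Real.sin t • S1 n) * (Complex.I • S2 n) =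
    (-Real.sin t) • S3 n - Real.cos t • S1 n := by
  have e3 : Complex.I • (S2 n * S3 n) = Complex.I • (S3 n * S2 n) - S1 n := by
    have h := CA3 n
    rw [smul_mul_assoc, mul_smul_comm] at h
    linear_combination (norm := abel) h
  have e1 : Complex.I • (S2 n * S1 n) = Complex.I • (S1 n * S2 n) + S3 n := by
    have h := CA1 n
    rw [smul_mul_assoc, mul_smul_comm] at h
    linear_combination (norm := abel) h
  simp only [mul_sub, sub_mul, smul_mul_assoc, mul_smul_comm, smul_sub, smul_add]
  simp only [smul_comm Complex.I]
  rw [e3, e1]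
  module

lemma real_smul_eq (n : ℕ) (r : ℝ) (M : Matrix (Fin (n+1)) (Fin (n+1)) ℂ) :
    ((r : ℂ)) • M = r • M := by
  ext j k
  simp [Matrix.smul_apply, Complex.real_smul]

lemma scalar_rw (n : ℕ) (t : ℝ) :
    (Complex.I * (t:ℂ)) • S2 n = t • (Complex.I • S2 n) := by
  rw [← smul_assoc]
  congr 1
  rw [Complex.real_smul, mul_comm]

lemma scalar_rw' (n : ℕ) (t : ℝ) :
    (-Complex.I * (t:ℂ)) • S2 n = t • (-(Complex.I • S2 n)) := by
  rw [← neg_smul, ← smul_assoc]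
  congr 1
  rw [Complex.real_smul]
  ring

lemma exp_conj_S2 (n : ℕ) (θ : ℝ) :
    NormedSpace.exp ((Complex.I * (θ:ℂ)) • S2 n) * S3 n *
      NormedSpace.exp ((-Complex.I * (θ:ℂ)) • S2 n) =
    Real.cos θ • S3 n - Real.sin θ • S1 n := by
  have hexp : (NormedSpace.exp : Matrix (Fin (n+1)) (Fin (n+1)) ℂ → _) = NormedSpace.exp :=
    rfl
  rw [scalar_rw, scalar_rw', hexp]
  set A := Complex.I • S2 n with hAdef
  set f : ℝ → Matrix (Fin (n+1)) (Fin (n+1)) ℂ := fun t =>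
    NormedSpace.exp (t • (-A)) * (Real.cos t • S3 n - Real.sin t • S1 n) *
      NormedSpace.exp (t • A) with hfdef
  have hf : ∀ t : ℝ, HasDerivAt f 0 t := by
    intro t
    have hEm : HasDerivAt (fun u : ℝ => NormedSpace.exp (u • (-A)))
        ((-A) * NormedSpace.exp (t • (-A))) t := hasDerivAt_exp_smul_const' (-A) t
    have hEp : HasDerivAt (fun u : ℝ => NormedSpace.exp (u • A))
        (A * NormedSpace.exp (t • A)) t := hasDerivAt_exp_smul_const' A t
    have hM : HasDerivAt (fun u : ℝ => Real.cos u • S3 n - Real.sin u • S1 n)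
        ((-Real.sin t) • S3 n - Real.cos t • S1 n) t :=
      ((Real.hasDerivAt_cos t).smul_const (S3 n)).sub
        ((Real.hasDerivAt_sin t).smul_const (S1 n))
    have h12 := hEm.mul hM
    have h := h12.mul hEp
    simp only [Pi.mul_apply] at h
    refine h.congr_deriv ?_
    -- show 0 = total derivative
    have hcommA : (-A) * NormedSpace.exp (t • (-A)) = NormedSpace.exp (t • (-A)) * (-A) :=
      (((Commute.refl (-A)).smul_right t).exp_right).eq
    set Em := NormedSpace.exp (t • (-A))
    set Ep := NormedSpace.exp (t • A)
    set M := Real.cos t • S3 n - Real.sin t • S1 n with hM'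
    have key : (-Real.sin t) • S3 n - Real.cos t • S1 n = A * M - M * A := (Mderiv n t).symm
    rw [key, hcommA]
    noncomm_ring
  have hconst := is_const_of_deriv_eq_zero
    (fun x => (hf x).differentiableAt) (fun x => (hf x).deriv) θ 0
  have hf0 : f 0 = S3 n := by
    simp [hfdef, NormedSpace.exp_zero]
  have hfθ : f θ = S3 n := by rw [hconst, hf0]
  -- multiply both sides
  have c1 : Commute (θ • A) (θ • (-A)) :=
    (((Commute.refl A).neg_right).smul_left θ).smul_right θ
  have hinv1 : NormedSpace.exp (θ • A) * NormedSpace.exp (θ • (-A)) = 1 := by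
    rw [← Matrix.exp_add_of_commute _ _ c1, ← smul_add, add_neg_cancel, smul_zero,
      NormedSpace.exp_zero]
  have hinv2 : NormedSpace.exp (θ • (-A)) * NormedSpace.exp (θ • A) = 1 := by
    rw [← Matrix.exp_add_of_commute _ _ c1.symm, ← smul_add, neg_add_cancel, smul_zero,
      NormedSpace.exp_zero]
  calc NormedSpace.exp (θ • A) * S3 n * NormedSpace.exp (θ • (-A))
      = NormedSpace.exp (θ • A) * f θ * NormedSpace.exp (θ • (-A)) := by rw [hfθ]
    _ = (NormedSpace.exp (θ • A) * NormedSpace.exp (θ • (-A))) *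
          (Real.cos θ • S3 n - Real.sin θ • S1 n) *
          (NormedSpace.exp (θ • A) * NormedSpace.exp (θ • (-A))) := by
        simp only [hfdef]
        noncomm_ring
    _ = Real.cos θ • S3 n - Real.sin θ • S1 n := by rw [hinv1]; simp

lemma exp_S3_diag (n : ℕ) (z : ℂ) :
    NormedSpace.exp (z • S3 n) =
      Matrix.diagonal (fun j : Fin (n+1) => Complex.exp (z * (((j:ℕ):ℂ) - (n:ℂ)/2))) := by
  rw [S3, ← Matrix.diagonal_smul, Matrix.exp_diagonal]
  rw [Pi.exp_def]
  funext j
  simp [Pi.smul_apply, smul_eq_mul, ← Complex.exp_eq_exp_ℂ]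

lemma star_scal (a : ℝ) : star (-Complex.I * (a:ℂ)) = Complex.I * (a:ℂ) := by
  simp [Complex.star_def, _root_.map_mul]

lemma expS3_conjT (n : ℕ) (a : ℝ) :
    (NormedSpace.exp ((-Complex.I * (a:ℂ)) • S3 n))ᴴ =
      NormedSpace.exp ((Complex.I * (a:ℂ)) • S3 n) := by
  rw [← Matrix.exp_conjTranspose, Matrix.conjTranspose_smul, S3_herm, star_scal]

lemma expS2_conjT (n : ℕ) (a : ℝ) :
    (NormedSpace.exp ((-Complex.I * (a:ℂ)) • S2 n))ᴴ =
      NormedSpace.exp ((Complex.I * (a:ℂ)) • S2 n) := by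
  rw [← Matrix.exp_conjTranspose, Matrix.conjTranspose_smul, S2_herm, star_scal]

lemma QP_one (n : ℕ) (a : ℝ) :
    NormedSpace.exp ((Complex.I * (a:ℂ)) • S3 n) *
      NormedSpace.exp ((-Complex.I * (a:ℂ)) • S3 n) = 1 := by
  rw [← Matrix.exp_add_of_commute _ _ (((Commute.refl (S3 n)).smul_left _).smul_right _),
    ← add_smul]
  have : Complex.I * (a:ℂ) + -Complex.I * (a:ℂ) = 0 := by ring
  rw [this, zero_smul, NormedSpace.exp_zero]

lemma QS3_comm (n : ℕ) (a : ℝ) :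
    NormedSpace.exp ((Complex.I * (a:ℂ)) • S3 n) * S3 n =
      S3 n * NormedSpace.exp ((Complex.I * (a:ℂ)) • S3 n) := by
  exact (((Commute.refl (S3 n)).smul_left (Complex.I * (a:ℂ))).exp_left).eq

lemma conj_Rot (n : ℕ) (φ θ ψ : ℝ) :
    (Rot n φ θ ψ)ᴴ * (S3 n * Rot n φ θ ψ) =
      Real.cos θ • S3 n - Real.sin θ •
        (NormedSpace.exp ((Complex.I * (ψ:ℂ)) • S3 n) * S1 n *
         NormedSpace.exp ((-Complex.I * (ψ:ℂ)) • S3 n)) := by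
  set P : ℝ → Matrix (Fin (n+1)) (Fin (n+1)) ℂ :=
    fun a => NormedSpace.exp ((-Complex.I * (a:ℂ)) • S3 n) with hP
  set Q : ℝ → Matrix (Fin (n+1)) (Fin (n+1)) ℂ :=
    fun a => NormedSpace.exp ((Complex.I * (a:ℂ)) • S3 n) with hQ
  set E : Matrix (Fin (n+1)) (Fin (n+1)) ℂ :=
    NormedSpace.exp ((-Complex.I * (θ:ℂ)) • S2 n) with hE
  set F : Matrix (Fin (n+1)) (Fin (n+1)) ℂ :=
    NormedSpace.exp ((Complex.I * (θ:ℂ)) • S2 n) with hF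
  have hRH : (Rot n φ θ ψ)ᴴ = Q ψ * F * Q φ := by
    rw [Rot, Matrix.conjTranspose_mul, Matrix.conjTranspose_mul, expS3_conjT, expS3_conjT,
      expS2_conjT]
    rw [mul_assoc]
  have step1 : (Rot n φ θ ψ)ᴴ * (S3 n * Rot n φ θ ψ)
      = Q ψ * (F * S3 n * E) * P ψ := by
    rw [hRH, Rot]
    show Q ψ * F * Q φ * (S3 n * (P φ * E * P ψ)) = _
    calc Q ψ * F * Q φ * (S3 n * (P φ * E * P ψ))
        = Q ψ * F * (Q φ * S3 n) * (P φ * E * P ψ) := by noncomm_ring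
      _ = Q ψ * F * (S3 n * Q φ) * (P φ * E * P ψ) := by rw [QS3_comm]
      _ = Q ψ * F * S3 n * (Q φ * P φ) * (E * P ψ) := by noncomm_ring
      _ = Q ψ * F * S3 n * (E * P ψ) := by rw [QP_one, mul_one]
      _ = Q ψ * (F * S3 n * E) * P ψ := by noncomm_ring
  rw [step1, exp_conj_S2]
  have hQS3P : Q ψ * S3 n * P ψ = S3 n := by
    rw [QS3_comm, mul_assoc, QP_one, mul_one]
  calc Q ψ * (Real.cos θ • S3 n - Real.sin θ • S1 n) * P ψ
      = Real.cos θ • (Q ψ * S3 n * P ψ) - Real.sin θ • (Q ψ * S1 n * P ψ) := by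
        rw [mul_sub, sub_mul, mul_smul_comm, mul_smul_comm, smul_mul_assoc, smul_mul_assoc]
    _ = Real.cos θ • S3 n - Real.sin θ • (Q ψ * S1 n * P ψ) := by rw [hQS3P]

lemma E0 (n : ℕ) (c : ℕ → ℂ) :
    (star (fun j : Fin (n+1) => c (j:ℕ))) ⬝ᵥ (S3 n *ᵥ fun j : Fin (n+1) => c (j:ℕ))
      = ((A0 n c : ℝ) : ℂ) := by
  unfold A0
  rw [Complex.ofReal_sum]
  rw [← Fin.sum_univ_eq_sum_range
    (fun i => ((((i:ℝ) - (n:ℝ)/2) * ‖c i‖ ^ 2 : ℝ) : ℂ)) (n+1)]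
  rw [dotProduct]
  apply Finset.sum_congr rfl
  intro j _
  simp only [S3, Matrix.mulVec_diagonal, Pi.star_apply, RCLike.star_def]
  have habs : ((‖c (j:ℕ)‖ : ℝ) : ℂ) ^ 2 = c (j:ℕ) * (starRingEnd ℂ) (c (j:ℕ)) := by
    rw [← Complex.ofReal_pow, ← Complex.normSq_eq_norm_sq, Complex.mul_conj]
  push_cast
  rw [habs]
  ring

lemma N_apply (n : ℕ) (ψ : ℝ) (j k : Fin (n+1)) :
    (NormedSpace.exp ((Complex.I * (ψ:ℂ)) • S3 n) * S1 n *
      NormedSpace.exp ((-Complex.I * (ψ:ℂ)) • S3 n)) j k =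
    (2:ℂ)⁻¹ * (Complex.exp (Complex.I * (ψ:ℂ)) *
        (if (j:ℕ) = (k:ℕ)+1 then (fc n (j:ℕ) : ℂ) else 0) +
      Complex.exp (-(Complex.I * (ψ:ℂ))) *
        (if (k:ℕ) = (j:ℕ)+1 then (fc n (k:ℕ) : ℂ) else 0)) := by
  rw [exp_S3_diag, exp_S3_diag, Matrix.mul_diagonal, Matrix.diagonal_mul]
  unfold S1 fc
  simp only [Matrix.smul_apply, Matrix.add_apply, Sp, Sm, Matrix.conjTranspose_apply,
    Matrix.of_apply, smul_eq_mul, apply_ite (star : ℂ → ℂ), star_zero, Complex.star_def,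
    Complex.conj_ofReal]
  split_ifs with h1 h2 h2
  · omega
  · -- j = k+1
    have hexp : Complex.exp (Complex.I * (ψ:ℂ) * (((j:ℕ):ℂ) - (n:ℂ)/2)) *
        Complex.exp (-Complex.I * (ψ:ℂ) * (((k:ℕ):ℂ) - (n:ℂ)/2)) =
        Complex.exp (Complex.I * (ψ:ℂ)) := by
      rw [← Complex.exp_add]
      congr 1
      have hc : ((j:ℕ):ℂ) = ((k:ℕ):ℂ) + 1 := by exact_mod_cast congrArg (Nat.cast : ℕ → ℂ) h1
      rw [hc]; ring
    have hfc : Real.sqrt ((((j:ℕ):ℝ)) * ((n:ℝ) - ((j:ℕ):ℝ) + 1)) =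
        Real.sqrt ((((k:ℕ):ℝ) + 1) * ((n:ℝ) - ((k:ℕ):ℝ))) := by
      congr 1
      have hc : ((j:ℕ):ℝ) = ((k:ℕ):ℝ) + 1 := by exact_mod_cast congrArg (Nat.cast : ℕ → ℝ) h1
      rw [hc]; ring
    rw [hfc]
    linear_combination ((2:ℂ)⁻¹ * (Real.sqrt ((((k:ℕ):ℝ) + 1) * ((n:ℝ) - ((k:ℕ):ℝ))) : ℂ)) * hexp
  · -- k = j+1
    have hexp : Complex.exp (Complex.I * (ψ:ℂ) * (((j:ℕ):ℂ) - (n:ℂ)/2)) *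
        Complex.exp (-Complex.I * (ψ:ℂ) * (((k:ℕ):ℂ) - (n:ℂ)/2)) =
        Complex.exp (-(Complex.I * (ψ:ℂ))) := by
      rw [← Complex.exp_add]
      congr 1
      have hc : ((k:ℕ):ℂ) = ((j:ℕ):ℂ) + 1 := by exact_mod_cast congrArg (Nat.cast : ℕ → ℂ) h2
      rw [hc]; ring
    have hfc : Real.sqrt ((((k:ℕ):ℝ)) * ((n:ℝ) - ((k:ℕ):ℝ) + 1)) =
        Real.sqrt ((((j:ℕ):ℝ) + 1) * ((n:ℝ) - ((j:ℕ):ℝ))) := by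
      congr 1
      have hc : ((k:ℕ):ℝ) = ((j:ℕ):ℝ) + 1 := by exact_mod_cast congrArg (Nat.cast : ℕ → ℝ) h2
      rw [hc]; ring
    rw [hfc]
    linear_combination ((2:ℂ)⁻¹ * (Real.sqrt ((((j:ℕ):ℝ) + 1) * ((n:ℝ) - ((j:ℕ):ℝ))) : ℂ)) * hexp
  · ring

lemma double_sum (n : ℕ) (F : ℕ → ℕ → ℂ) :
    (∑ j : Fin (n+1), ∑ k : Fin (n+1), F (j:ℕ) (k:ℕ)) =
      ∑ j ∈ Finset.range (n+1), ∑ k ∈ Finset.range (n+1), F j k := by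
  calc (∑ j : Fin (n+1), ∑ k : Fin (n+1), F (j:ℕ) (k:ℕ))
      = ∑ j : Fin (n+1), (fun jj => ∑ k ∈ Finset.range (n+1), F jj k) (j:ℕ) := by
        apply Finset.sum_congr rfl
        intro j _
        exact Fin.sum_univ_eq_sum_range (fun k => F (j:ℕ) k) (n+1)
    _ = _ := Fin.sum_univ_eq_sum_range (fun jj => ∑ k ∈ Finset.range (n+1), F jj k) (n+1)

lemma sum_shift1 (n : ℕ) (G : ℕ → ℕ → ℂ) :
    (∑ j ∈ Finset.range (n+1), ∑ k ∈ Finset.range (n+1),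
      (if j = k+1 then G j k else 0)) = ∑ k ∈ Finset.range n, G (k+1) k := by
  rw [Finset.sum_comm]
  have h1 : ∀ k ∈ Finset.range (n+1),
      (∑ j ∈ Finset.range (n+1), (if j = k+1 then G j k else 0)) =
        if k+1 ∈ Finset.range (n+1) then G (k+1) k else 0 := by
    intro k _
    exact Finset.sum_ite_eq' (Finset.range (n+1)) (k+1) (fun j => G j k)
  rw [Finset.sum_congr rfl h1]
  rw [Finset.sum_range_succ]
  simp only [Finset.mem_range, add_lt_add_iff_right]
  rw [if_neg (lt_irrefl n), add_zero]
  apply Finset.sum_congr rfl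
  intro k hk
  rw [if_pos (Finset.mem_range.mp hk)]

lemma sum_shift2 (n : ℕ) (G : ℕ → ℕ → ℂ) :
    (∑ j ∈ Finset.range (n+1), ∑ k ∈ Finset.range (n+1),
      (if k = j+1 then G j k else 0)) = ∑ j ∈ Finset.range n, G j (j+1) := by
  have h1 : ∀ j ∈ Finset.range (n+1),
      (∑ k ∈ Finset.range (n+1), (if k = j+1 then G j k else 0)) =
        if j+1 ∈ Finset.range (n+1) then G j (j+1) else 0 := by
    intro j _
    exact Finset.sum_ite_eq' (Finset.range (n+1)) (j+1) (fun k => G j k)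
  rw [Finset.sum_congr rfl h1]
  rw [Finset.sum_range_succ]
  simp only [Finset.mem_range, add_lt_add_iff_right]
  rw [if_neg (lt_irrefl n), add_zero]
  apply Finset.sum_congr rfl
  intro k hk
  rw [if_pos (Finset.mem_range.mp hk)]

lemma E1 (n : ℕ) (c : ℕ → ℂ) (ψ : ℝ) :
    (star (fun j : Fin (n+1) => c (j:ℕ))) ⬝ᵥ
      ((NormedSpace.exp ((Complex.I * (ψ:ℂ)) • S3 n) * S1 n *
        NormedSpace.exp ((-Complex.I * (ψ:ℂ)) • S3 n)) *ᵥ fun j : Fin (n+1) => c (j:ℕ))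
      = A1 n c ψ := by
  set ep := Complex.exp (Complex.I * (ψ:ℂ)) with hep
  set em := Complex.exp (-(Complex.I * (ψ:ℂ))) with hem
  have lhs_eq : (star (fun j : Fin (n+1) => c (j:ℕ))) ⬝ᵥ
      ((NormedSpace.exp ((Complex.I * (ψ:ℂ)) • S3 n) * S1 n *
        NormedSpace.exp ((-Complex.I * (ψ:ℂ)) • S3 n)) *ᵥ fun j : Fin (n+1) => c (j:ℕ))
      = ∑ j : Fin (n+1), ∑ k : Fin (n+1),
          ((if (j:ℕ) = (k:ℕ)+1 then (2:ℂ)⁻¹ * ep * ((starRingEnd ℂ) (c (j:ℕ)) *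
              (fc n (j:ℕ) : ℂ) * c (k:ℕ)) else 0) +
           (if (k:ℕ) = (j:ℕ)+1 then (2:ℂ)⁻¹ * em * ((starRingEnd ℂ) (c (j:ℕ)) *
              (fc n (k:ℕ) : ℂ) * c (k:ℕ)) else 0)) := by
    rw [dotProduct]
    apply Finset.sum_congr rfl
    intro j _
    rw [Matrix.mulVec, dotProduct, Finset.mul_sum]
    apply Finset.sum_congr rfl
    intro k _
    rw [N_apply]
    simp only [Pi.star_apply, RCLike.star_def, ← hep, ← hem]
    split_ifs with h1 h2 h2 <;> ring
  rw [lhs_eq]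
  rw [double_sum n (fun j k =>
      ((if j = k+1 then (2:ℂ)⁻¹ * ep * ((starRingEnd ℂ) (c j) * (fc n j : ℂ) * c k) else 0) +
       (if k = j+1 then (2:ℂ)⁻¹ * em * ((starRingEnd ℂ) (c j) * (fc n k : ℂ) * c k) else 0)))]
  simp only [Finset.sum_add_distrib]
  rw [sum_shift1 n (fun j k => (2:ℂ)⁻¹ * ep * ((starRingEnd ℂ) (c j) * (fc n j : ℂ) * c k)),
    sum_shift2 n (fun j k => (2:ℂ)⁻¹ * em * ((starRingEnd ℂ) (c j) * (fc n k : ℂ) * c k))]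
  unfold A1
  rw [← Finset.Ico_add_one_right_eq_Icc, Finset.sum_Ico_eq_sum_range]
  have hr : n + 1 - 1 = n := rfl
  rw [hr]
  rw [Finset.mul_sum, ← Finset.sum_add_distrib]
  apply Finset.sum_congr rfl
  intro i _
  have h1 : 1 + i - 1 = i := by omega
  have h2 : 1 + i = i + 1 := by omega
  rw [h2, Nat.add_sub_cancel]
  ring

/-- Expectation value of `S₃` in the general coherent state `R(Ω)Ψ₀`:
`⟨R(Ω)Ψ₀, S₃ R(Ω)Ψ₀⟩ = A₀ cos θ - A₁(ψ) sin θ`. -/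
theorem expectation_S3 (n : ℕ) (c : ℕ → ℂ)
    (hc : ∑ j ∈ Finset.range (n+1), ‖c j‖ ^ 2 = 1)
    (φ θ ψ : ℝ) :
    star (Rot n φ θ ψ *ᵥ fun j : Fin (n+1) => c (j : ℕ)) ⬝ᵥ
        (S3 n *ᵥ (Rot n φ θ ψ *ᵥ fun j : Fin (n+1) => c (j : ℕ))) =
      ((A0 n c : ℝ) : ℂ) * ((Real.cos θ : ℝ) : ℂ) -
        A1 n c ψ * ((Real.sin θ : ℝ) : ℂ) := by
  rw [Matrix.star_mulVec, ← Matrix.dotProduct_mulVec, Matrix.mulVec_mulVec,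
    Matrix.mulVec_mulVec, mul_assoc, conj_Rot]
  rw [← real_smul_eq n (Real.cos θ), ← real_smul_eq n (Real.sin θ)]
  rw [Matrix.sub_mulVec, Matrix.smul_mulVec, Matrix.smul_mulVec,
    dotProduct_sub, dotProduct_smul, dotProduct_smul]
  rw [E0, E1]
  simp only [smul_eq_mul]
  ring
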